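/- Let f : 2^E → ℝ≥0 be a monotone submodular function with f(∅)=0 (a rank function) on a finite set E, and let Q : E → ℝ≥0. Define f'(U) = min over R ⊆ U of ( f(U \ R) + Σ_{e∈R} Q(e) ). Then f' is again a monotone submodular function with f'(∅)=0. -/

import Mathlib

/-- if `f` is a normalized monotone submodular (rank) function and
`Q ≥ 0`, then `f'(U) = min_{R ⊆ U} ( f(U \ R) + Σ_{e∈R} Q e )` is again a
normalized monotone submodular function. -/
theorem truncated_rank_function {ι : Type*} [Fintype ι] [DecidableEq ι]
    (f : Finset ι → ℝ)
    (hf_nonneg : ∀ S, 0 ≤ f S)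
    (hf_norm : f ∅ = 0)
    (hf_mono : ∀ A B : Finset ι, A ⊆ B → f A ≤ f B)
    (hf_sub : ∀ A B : Finset ι, A ⊆ B → ∀ e ∉ B,
      f (insert e A) - f A ≥ f (insert e B) - f B)
    (Q : ι → ℝ) (hQ : ∀ e, 0 ≤ Q e)
    (f' : Finset ι → ℝ)
    (hf' : ∀ U : Finset ι,
      f' U = U.powerset.inf' (Finset.powerset_nonempty U)
        (fun R => f (U \ R) + ∑ e ∈ R, Q e)) :
    f' ∅ = 0 ∧
    (∀ A B : Finset ι, A ⊆ B → f' A ≤ f' B) ∧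
    (∀ A B : Finset ι, A ⊆ B → ∀ e ∉ B,
      f' (insert e A) - f' A ≥ f' (insert e B) - f' B) := by
  -- insert form of submodularity, allowing e ∈ Y
  have insert_sub : ∀ (X Y : Finset ι) (e : ι), X ⊆ Y →
      f (insert e X) + f Y ≥ f (insert e Y) + f X := by
    intro X Y e hXY
    by_cases he : e ∈ Y
    · rw [Finset.insert_eq_self.2 he]
      have := hf_mono X (insert e X) (Finset.subset_insert _ _)
      linarith
    · have := hf_sub X Y hXY e he
      linarith
  -- union form
  have union_sub : ∀ (C A B : Finset ι), A ⊆ B →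
      f (A ∪ C) + f B ≥ f (B ∪ C) + f A := by
    intro C
    induction C using Finset.induction_on with
    | empty => intro A B hAB; simp only [Finset.union_empty]; linarith
    | insert e C he ih =>
      intro A B hAB
      have h1 := ih A B hAB
      have h2 := insert_sub (A ∪ C) (B ∪ C) e (Finset.union_subset_union hAB (le_refl C))
      rw [Finset.union_insert, Finset.union_insert]
      linarith
  -- lattice submodularity of f
  have lattice_sub : ∀ P S : Finset ι, f (P ∪ S) + f (P ∩ S) ≤ f P + f S := by
    intro P S
    have h := union_sub P (P ∩ S) S Finset.inter_subset_right
    have e0 : P ∩ S ∪ P = P := by ext x; simp only [Finset.mem_union, Finset.mem_inter]; tauto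
    have e0' : S ∪ P = P ∪ S := Finset.union_comm _ _
    rw [e0, e0'] at h
    linarith
  -- basic facts about f'
  have key : ∀ U R : Finset ι, R ⊆ U → f' U ≤ f (U \ R) + ∑ e ∈ R, Q e := by
    intro U R hR
    rw [hf']
    exact Finset.inf'_le _ (Finset.mem_powerset.2 hR)
  have exmin : ∀ U : Finset ι, ∃ R ⊆ U, f' U = f (U \ R) + ∑ e ∈ R, Q e := by
    intro U
    rw [hf']
    obtain ⟨R, hR, hval⟩ := Finset.exists_mem_eq_inf' (Finset.powerset_nonempty U)
      (fun R => f (U \ R) + ∑ e ∈ R, Q e)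
    exact ⟨R, Finset.mem_powerset.1 hR, hval⟩
  -- normalization
  have hnorm : f' ∅ = 0 := by
    have h1 := key ∅ ∅ (le_refl _)
    obtain ⟨R, hR, hval⟩ := exmin ∅
    rw [Finset.subset_empty] at hR
    subst hR
    simp [hf_norm] at h1 hval
    linarith
  refine ⟨hnorm, ?_, ?_⟩
  · -- monotonicity
    intro A B hAB
    obtain ⟨R, hR, hval⟩ := exmin B
    have h1 := key A (R ∩ A) Finset.inter_subset_right
    have hsd : A \ (R ∩ A) = A \ R := by
      ext x; simp only [Finset.mem_sdiff, Finset.mem_inter]; tauto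
    rw [hsd] at h1
    have h2 : f (A \ R) ≤ f (B \ R) :=
      hf_mono _ _ (Finset.sdiff_subset_sdiff hAB (le_refl R))
    have h3 : ∑ e ∈ R ∩ A, Q e ≤ ∑ e ∈ R, Q e :=
      Finset.sum_le_sum_of_subset_of_nonneg Finset.inter_subset_left
        (fun i _ _ => hQ i)
    linarith
  · -- submodularity
    intro A B hAB e heB
    set X := insert e A with hX
    set Y := B with hY
    have hXuY : X ∪ Y = insert e B := by
      rw [hX, Finset.insert_union, Finset.union_eq_right.2 hAB]
    have hXiY : X ∩ Y = A := by
      ext x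
      simp only [hX, Finset.mem_inter, Finset.mem_insert]
      constructor
      · rintro ⟨hx1 | hx1, hx2⟩
        · exact absurd (hx1 ▸ hx2) heB
        · exact hx1
      · intro hx; exact ⟨Or.inr hx, hAB hx⟩
    obtain ⟨RX, hRX, hvalX⟩ := exmin X
    obtain ⟨RY, hRY, hvalY⟩ := exmin Y
    set P := X \ RX with hP
    set S := Y \ RY with hS
    set R : Finset ι := (X ∪ Y) \ (P ∪ S) with hR
    set R' : Finset ι := (X ∩ Y) \ (P ∩ S) with hR'
    -- candidate bounds
    have hRsub : R ⊆ X ∪ Y := Finset.sdiff_subset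
    have hR'sub : R' ⊆ X ∩ Y := Finset.sdiff_subset
    have h1 : f' (X ∪ Y) ≤ f ((X ∪ Y) \ R) + ∑ x ∈ R, Q x := key _ _ hRsub
    have h2 : f' (X ∩ Y) ≤ f ((X ∩ Y) \ R') + ∑ x ∈ R', Q x := key _ _ hR'sub
    have hPX : P ⊆ X := Finset.sdiff_subset
    have hSY : S ⊆ Y := Finset.sdiff_subset
    have e1 : (X ∪ Y) \ R = P ∪ S := by
      have hsub : P ∪ S ⊆ X ∪ Y := Finset.union_subset_union hPX hSY
      rw [hR]; ext x
      simp only [Finset.mem_sdiff, Finset.mem_union]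
      constructor
      · rintro ⟨h1, h2⟩; push_neg at h2; tauto
      · intro hx
        rcases hx with hx | hx
        · exact ⟨Or.inl (hPX hx), fun h => h.2 (Or.inl hx)⟩
        · exact ⟨Or.inr (hSY hx), fun h => h.2 (Or.inr hx)⟩
    have e2 : (X ∩ Y) \ R' = P ∩ S := by
      rw [hR']; ext x
      simp only [Finset.mem_sdiff, Finset.mem_inter]
      constructor
      · rintro ⟨⟨h1, h2⟩, h3⟩; push_neg at h3; tauto
      · intro hx
        exact ⟨⟨hPX hx.1, hSY hx.2⟩, fun h => h.2 hx⟩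
    rw [e1] at h1
    rw [e2] at h2
    -- f part
    have hflat : f (P ∪ S) + f (P ∩ S) ≤ f P + f S := lattice_sub P S
    -- Q part: R ∪ R' ⊆ RX ∪ RY and R ∩ R' ⊆ RX ∩ RY
    have hmemP : ∀ x, x ∈ P ↔ x ∈ X ∧ x ∉ RX := by intro x; simp [hP]
    have hmemS : ∀ x, x ∈ S ↔ x ∈ Y ∧ x ∉ RY := by intro x; simp [hS]
    have hsub1 : R ∪ R' ⊆ RX ∪ RY := by
      intro u hu
      simp only [Finset.mem_union, hR, hR', Finset.mem_sdiff, Finset.mem_inter,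
        Finset.mem_union] at hu ⊢
      rcases hu with ⟨hu1, hu2⟩ | ⟨⟨huX, huY⟩, hu2⟩
      · push_neg at hu2
        rcases hu1 with huX | huY
        · left
          by_contra h
          exact hu2.1 ((hmemP u).2 ⟨huX, h⟩)
        · right
          by_contra h
          exact hu2.2 ((hmemS u).2 ⟨huY, h⟩)
      · by_cases h : u ∈ RX
        · exact Or.inl h
        · right
          have huP : u ∈ P := (hmemP u).2 ⟨huX, h⟩
          by_contra hh
          exact hu2 ⟨huP, (hmemS u).2 ⟨huY, hh⟩⟩
    have hsub2 : R ∩ R' ⊆ RX ∩ RY := by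
      intro u hu
      simp only [Finset.mem_inter, hR, hR', Finset.mem_sdiff, Finset.mem_union,
        Finset.mem_inter] at hu ⊢
      obtain ⟨⟨_, hu2⟩, ⟨huX, huY⟩, _⟩ := hu
      push_neg at hu2
      constructor
      · by_contra h; exact hu2.1 ((hmemP u).2 ⟨huX, h⟩)
      · by_contra h; exact hu2.2 ((hmemS u).2 ⟨huY, h⟩)
    have hQsum : (∑ x ∈ R, Q x) + (∑ x ∈ R', Q x) ≤ (∑ x ∈ RX, Q x) + (∑ x ∈ RY, Q x) := by
      have b1 : (∑ x ∈ R ∪ R', Q x) + (∑ x ∈ R ∩ R', Q x) = (∑ x ∈ R, Q x) + (∑ x ∈ R', Q x) :=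
        Finset.sum_union_inter
      have b2 : (∑ x ∈ RX ∪ RY, Q x) + (∑ x ∈ RX ∩ RY, Q x) = (∑ x ∈ RX, Q x) + (∑ x ∈ RY, Q x) :=
        Finset.sum_union_inter
      have a1 : ∑ x ∈ R ∪ R', Q x ≤ ∑ x ∈ RX ∪ RY, Q x :=
        Finset.sum_le_sum_of_subset_of_nonneg hsub1 (fun i _ _ => hQ i)
      have a2 : ∑ x ∈ R ∩ R', Q x ≤ ∑ x ∈ RX ∩ RY, Q x :=
        Finset.sum_le_sum_of_subset_of_nonneg hsub2 (fun i _ _ => hQ i)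
      linarith
    have hfinal : f' (X ∪ Y) + f' (X ∩ Y) ≤ f' X + f' Y := by
      rw [hvalX, hvalY]
      have : f P + f S = f (X \ RX) + f (Y \ RY) := by rw [hP, hS]
      linarith [h1, h2, hflat, hQsum]
    rw [hXuY, hXiY] at hfinal
    linarith
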